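/- (Lemma 7, second part) Let ρ₁ ∈ ℝ, ρ₂ = −(2/√5)ρ₁, ρ₃ = (2√3/√10)ρ₁, and f = ρ₁e₁ + ρ₂e₂ + ρ₃e₃ ∈ ℝ⁴. Then ⟨Vf, h⟩ = 0 for every h ∈ ℝ⁴ with Lh = 0, where V = diag(1, 1/2, −1/2, −1). -/

import Mathlib

open Finset

/-- The linearized collision operator of the one-dimensional Broadwell model with
collision frequency `B`, as a `4 × 4` matrix. -/
noncomputable def LBmat (B : ℝ) : Matrix (Fin 4) (Fin 4) ℝ :=
  (-(B / 3)) • !![-2, Real.sqrt 2, Real.sqrt 2, -2;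
                  Real.sqrt 2, -1, -1, Real.sqrt 2;
                  Real.sqrt 2, -1, -1, Real.sqrt 2;
                  -2, Real.sqrt 2, Real.sqrt 2, -2]

/-- `e₁ = (√2/2, 0, 0, −√2/2)`. -/
noncomputable def eB1 : EuclideanSpace ℝ (Fin 4) :=
  WithLp.toLp 2 ![Real.sqrt 2 / 2, 0, 0, -(Real.sqrt 2 / 2)]

/-- `e₂ = (1/√10, 2/√5, 0, 1/√10)`. -/
noncomputable def eB2 : EuclideanSpace ℝ (Fin 4) :=
  WithLp.toLp 2 ![1 / Real.sqrt 10, 2 / Real.sqrt 5, 0, 1 / Real.sqrt 10]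

/-- `e₃ = (1/√15, −1/√30, √5/√6, 1/√15)`. -/
noncomputable def eB3 : EuclideanSpace ℝ (Fin 4) :=
  WithLp.toLp 2 ![1 / Real.sqrt 15, -(1 / Real.sqrt 30), Real.sqrt 5 / Real.sqrt 6, 1 / Real.sqrt 15]

/-- The diagonal velocity matrix `V = diag(1, 1/2, −1/2, −1)` applied to `f`. -/
noncomputable def VB (f : Fin 4 → ℝ) : Fin 4 → ℝ :=
  ![f 0, f 1 / 2, -(f 2) / 2, -(f 3)]

/-- Lemma 7, second part: with `ρ₂ = −(2/√5)ρ₁`, `ρ₃ = (2√3/√10)ρ₁`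
and `f = ρ₁e₁ + ρ₂e₂ + ρ₃e₃`, one has `⟨Vf, h⟩ = 0` for every `h` with `Lh = 0`. -/
theorem broadwell_Vf_orthogonal_ker (B : ℝ) (hB : 0 < B) (ρ₁ ρ₂ ρ₃ : ℝ)
    (h2 : ρ₂ = -(2 / Real.sqrt 5) * ρ₁) (h3 : ρ₃ = 2 * Real.sqrt 3 / Real.sqrt 10 * ρ₁)
    (f : Fin 4 → ℝ) (hf : f = ρ₁ • eB1 + ρ₂ • eB2 + ρ₃ • eB3) :
    ∀ h : Fin 4 → ℝ, (LBmat B).mulVec h = 0 → ∑ i, VB f i * h i = 0 := by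
  intro h hh
  have hker := congrFun hh 0
  simp [LBmat, Matrix.mulVec, dotProduct, Fin.sum_univ_four] at hker
  have hk : 2 * h 3 - Real.sqrt 2 * h 2 - Real.sqrt 2 * h 1 + 2 * h 0 = 0 := by
    have h' : B / 3 * (2 * h 3 - Real.sqrt 2 * h 2 - Real.sqrt 2 * h 1 + 2 * h 0) = 0 := by
      linear_combination hker
    rcases mul_eq_zero.mp h' with h'' | h''
    · exfalso; nlinarith
    · exact h''
  have e10 : Real.sqrt 10 = Real.sqrt 2 * Real.sqrt 5 := by
    rw [← Real.sqrt_mul (by norm_num)]; norm_num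
  have e15 : Real.sqrt 15 = Real.sqrt 3 * Real.sqrt 5 := by
    rw [← Real.sqrt_mul (by norm_num)]; norm_num
  have e30 : Real.sqrt 30 = Real.sqrt 2 * (Real.sqrt 3 * Real.sqrt 5) := by
    rw [← Real.sqrt_mul (by norm_num), ← Real.sqrt_mul (by norm_num)]; norm_num
  have e6 : Real.sqrt 6 = Real.sqrt 2 * Real.sqrt 3 := by
    rw [← Real.sqrt_mul (by norm_num)]; norm_num
  have p2 : (0:ℝ) < Real.sqrt 2 := Real.sqrt_pos.mpr (by norm_num)
  have p3 : (0:ℝ) < Real.sqrt 3 := Real.sqrt_pos.mpr (by norm_num)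
  have p5 : (0:ℝ) < Real.sqrt 5 := Real.sqrt_pos.mpr (by norm_num)
  have q2 : Real.sqrt 2 ^ 2 = 2 := Real.sq_sqrt (by norm_num)
  have q3 : Real.sqrt 3 ^ 2 = 3 := Real.sq_sqrt (by norm_num)
  have q5 : Real.sqrt 5 ^ 2 = 5 := Real.sq_sqrt (by norm_num)
  have hf0 : f 0 = ρ₁ * (Real.sqrt 2 / 2) := by
    simp [hf, eB1, eB2, eB3, h2, h3]
    rw [e10, e15]
    field_simp
    ring
  have hf1 : f 1 = -ρ₁ := by
    simp [hf, eB1, eB2, eB3, h2, h3]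
    rw [e10, e30]
    field_simp
    linear_combination (ρ₁ * Real.sqrt 5 ^ 2 - 4 * ρ₁) * q2 + (2 * ρ₁) * q5
  have hf2 : f 2 = ρ₁ := by
    simp [hf, eB1, eB2, eB3, h2, h3]
    rw [e10, e6]
    field_simp
    linear_combination (-ρ₁) * q2
  have hf3 : f 3 = -(ρ₁ * (Real.sqrt 2 / 2)) := by
    simp [hf, eB1, eB2, eB3, h2, h3]
    rw [e10, e15]
    field_simp
    ring
  simp [VB, Fin.sum_univ_four, hf0, hf1, hf2, hf3]
  linear_combination (ρ₁ * Real.sqrt 2 / 4) * hk + (ρ₁ * (h 1 + h 2) / 4) * q2
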